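/- Let (G,B₁,B₂) be a Rota-Baxter system of groups with B₁(1_G)=B₂(1_G)=1_G, and let F[G] be the group algebra over a field F of characteristic 0. Define linear maps B̃₁, B̃₂ on F[G] by B̃₁(g)=B₁(g) and B̃₂(g)=B₂(g)⁻¹ for g∈G. Then (F[G], B̃₁, B̃₂) is a Rota-Baxter system of Hopf algebras. -/

import Mathlib

open TensorProduct LinearMap MonoidAlgebra

variable {F : Type*} [Field F] {G : Type*} [Group G]

/-- The comultiplication of the group-algebra Hopf structure: `Δ(g) = g ⊗ g`. -/
noncomputable def comulG (F : Type*) [Field F] (G : Type*) [Group G] :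
    MonoidAlgebra F G →ₗ[F] (MonoidAlgebra F G) ⊗[F] (MonoidAlgebra F G) :=
  Finsupp.lift ((MonoidAlgebra F G) ⊗[F] (MonoidAlgebra F G)) F G
    (fun g => MonoidAlgebra.single g (1 : F) ⊗ₜ[F] MonoidAlgebra.single g (1 : F))
    ∘ₗ (MonoidAlgebra.coeffLinearEquiv F).toLinearMap

/-- The counit of the group-algebra Hopf structure: `ε(g) = 1`. -/
noncomputable def counitG (F : Type*) [Field F] (G : Type*) [Group G] :
    MonoidAlgebra F G →ₗ[F] F :=
  Finsupp.lift F F G (fun _ => 1) ∘ₗ (MonoidAlgebra.coeffLinearEquiv F).toLinearMap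

/-- The antipode of the group-algebra Hopf structure: `S(g) = g⁻¹`. -/
noncomputable def antipodeG (F : Type*) [Field F] (G : Type*) [Group G] :
    MonoidAlgebra F G →ₗ[F] MonoidAlgebra F G :=
  MonoidAlgebra.mapDomainLinearMap F F (fun g : G => g⁻¹)

/-- The descendent operation `a ⊗ b ↦ C₁(a₁) b S(C₂(a₂))` on the group algebra. -/
noncomputable def circG (C₁ C₂ : MonoidAlgebra F G →ₗ[F] MonoidAlgebra F G) :
    (MonoidAlgebra F G) ⊗[F] (MonoidAlgebra F G) →ₗ[F] MonoidAlgebra F G :=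
  (LinearMap.mul' F (MonoidAlgebra F G))
    ∘ₗ (TensorProduct.map
        ((LinearMap.mul' F (MonoidAlgebra F G)) ∘ₗ TensorProduct.map C₁ LinearMap.id)
        ((antipodeG F G) ∘ₗ C₂))
    ∘ₗ (TensorProduct.assoc F _ _ _).symm.toLinearMap
    ∘ₗ (TensorProduct.map LinearMap.id
        (TensorProduct.comm F (MonoidAlgebra F G) (MonoidAlgebra F G)).toLinearMap)
    ∘ₗ (TensorProduct.assoc F _ _ _).toLinearMap
    ∘ₗ (TensorProduct.map (comulG F G) LinearMap.id)

lemma comulG_single (g : G) (c : F) :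
    comulG F G (MonoidAlgebra.single g c)
      = (MonoidAlgebra.single g c) ⊗ₜ[F] (MonoidAlgebra.single g 1) := by
  rw [comulG, LinearMap.comp_apply]
  simp only [LinearEquiv.coe_coe, MonoidAlgebra.coeffLinearEquiv_apply, MonoidAlgebra.coeff_single]
  erw [Finsupp.lift_apply, Finsupp.sum_single_index (by simp)]
  rw [TensorProduct.smul_tmul']
  congr 1
  exact (MonoidAlgebra.smul_single' c g 1).trans (by rw [mul_one])

lemma counitG_single (g : G) (c : F) : counitG F G (MonoidAlgebra.single g c) = c := by
  rw [counitG, LinearMap.comp_apply]; simp only [LinearEquiv.coe_coe, MonoidAlgebra.coeffLinearEquiv_apply, MonoidAlgebra.coeff_single]; erw [Finsupp.lift_apply, Finsupp.sum_single_index (by simp)]; simp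

set_option linter.unusedSectionVars false in
lemma lmap_single (f : G → G) (g : G) (c : F) :
    MonoidAlgebra.mapDomainLinearMap F F f (MonoidAlgebra.single g c) = MonoidAlgebra.single (f g) c := by
  exact MonoidAlgebra.mapDomainLinearMap_single f c g

lemma mlhom_ext {N : Type*} [AddCommMonoid N] [Module F N] ⦃φ ψ : MonoidAlgebra F G →ₗ[F] N⦄
    (h : ∀ (g : G) (c : F), φ (MonoidAlgebra.single g c) = ψ (MonoidAlgebra.single g c)) :
    φ = ψ :=
  MonoidAlgebra.lhom_ext' fun g => LinearMap.ext fun c => h g c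

lemma circG_single (f₁ f₂ : G → G) (g h : G) (c d : F) :
    circG (MonoidAlgebra.mapDomainLinearMap F F f₁) (MonoidAlgebra.mapDomainLinearMap F F f₂)
      ((MonoidAlgebra.single g c) ⊗ₜ[F] (MonoidAlgebra.single h d)) =
    MonoidAlgebra.single (f₁ g * h * (f₂ g)⁻¹) (c * d) := by
  simp only [circG, LinearMap.comp_apply, TensorProduct.map_tmul, comulG_single,
    LinearEquiv.coe_coe, TensorProduct.assoc_tmul, LinearMap.id_coe, id_eq,
    TensorProduct.comm_tmul, TensorProduct.assoc_symm_tmul, lmap_single,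
    LinearMap.mul'_apply, MonoidAlgebra.single_mul_single]
  rw [antipodeG, lmap_single, MonoidAlgebra.single_mul_single, mul_one]

/-- If `(G, B₁, B₂)` is a Rota-Baxter system of groups with `B₁(1) = B₂(1) = 1`, then the
linear extensions `B̃₁ : g ↦ B₁(g)` and `B̃₂ : g ↦ B₂(g)⁻¹` make the group algebra
`(F[G], B̃₁, B̃₂)` a Rota-Baxter system of Hopf algebras. -/
theorem groupAlgebra_rbSystem (B₁ B₂ : G → G)
    (hB1 : ∀ a b : G, B₁ a * B₁ b = B₁ (B₁ a * b * B₂ a))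
    (hB2 : ∀ a b : G, B₂ b * B₂ a = B₂ (B₁ a * b * B₂ a))
    (h1 : B₁ 1 = 1) (h2 : B₂ 1 = 1) :
    let Bt₁ : MonoidAlgebra F G →ₗ[F] MonoidAlgebra F G := MonoidAlgebra.mapDomainLinearMap F F B₁
    let Bt₂ : MonoidAlgebra F G →ₗ[F] MonoidAlgebra F G :=
      MonoidAlgebra.mapDomainLinearMap F F (fun g : G => (B₂ g)⁻¹)
    (comulG F G ∘ₗ Bt₁ = TensorProduct.map Bt₁ Bt₁ ∘ₗ comulG F G) ∧
    (counitG F G ∘ₗ Bt₁ = counitG F G) ∧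
    (comulG F G ∘ₗ Bt₂ = TensorProduct.map Bt₂ Bt₂ ∘ₗ comulG F G) ∧
    (counitG F G ∘ₗ Bt₂ = counitG F G) ∧
    Bt₁ 1 = 1 ∧ Bt₂ 1 = 1 ∧
    (∀ a b : MonoidAlgebra F G, Bt₁ a * Bt₁ b = Bt₁ (circG Bt₁ Bt₂ (a ⊗ₜ[F] b))) ∧
    (∀ a b : MonoidAlgebra F G, Bt₂ a * Bt₂ b = Bt₂ (circG Bt₁ Bt₂ (a ⊗ₜ[F] b))) := by
  intro Bt₁ Bt₂
  have hBt₁ : ∀ (g : G) (c : F), Bt₁ (MonoidAlgebra.single g c) = MonoidAlgebra.single (B₁ g) c :=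
    fun g c => lmap_single B₁ g c
  have hBt₂ : ∀ (g : G) (c : F),
      Bt₂ (MonoidAlgebra.single g c) = MonoidAlgebra.single (B₂ g)⁻¹ c :=
    fun g c => lmap_single _ g c
  refine ⟨?_, ?_, ?_, ?_, ?_, ?_, ?_, ?_⟩
  · apply mlhom_ext
    intro g c
    show comulG F G (Bt₁ (MonoidAlgebra.single g c))
      = TensorProduct.map Bt₁ Bt₁ (comulG F G (MonoidAlgebra.single g c))
    rw [hBt₁, comulG_single, comulG_single, TensorProduct.map_tmul, hBt₁, hBt₁]
  · apply mlhom_ext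
    intro g c
    show counitG F G (Bt₁ (MonoidAlgebra.single g c)) = counitG F G (MonoidAlgebra.single g c)
    rw [hBt₁, counitG_single, counitG_single]
  · apply mlhom_ext
    intro g c
    show comulG F G (Bt₂ (MonoidAlgebra.single g c))
      = TensorProduct.map Bt₂ Bt₂ (comulG F G (MonoidAlgebra.single g c))
    rw [hBt₂, comulG_single, comulG_single, TensorProduct.map_tmul, hBt₂, hBt₂]
  · apply mlhom_ext
    intro g c
    show counitG F G (Bt₂ (MonoidAlgebra.single g c)) = counitG F G (MonoidAlgebra.single g c)
    rw [hBt₂, counitG_single, counitG_single]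
  · rw [MonoidAlgebra.one_def, hBt₁, h1]
  · rw [MonoidAlgebra.one_def, hBt₂, h2, inv_one]
  · intro a b
    have key : (LinearMap.mul' F (MonoidAlgebra F G)) ∘ₗ TensorProduct.map Bt₁ Bt₁
        = Bt₁ ∘ₗ circG Bt₁ Bt₂ := by
      apply TensorProduct.ext
      apply mlhom_ext
      intro g c
      apply mlhom_ext
      intro h d
      show LinearMap.mul' F (MonoidAlgebra F G)
          (TensorProduct.map Bt₁ Bt₁ (MonoidAlgebra.single g c ⊗ₜ[F] MonoidAlgebra.single h d))
        = Bt₁ (circG Bt₁ Bt₂ (MonoidAlgebra.single g c ⊗ₜ[F] MonoidAlgebra.single h d))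
      rw [TensorProduct.map_tmul, hBt₁, hBt₁, LinearMap.mul'_apply,
        MonoidAlgebra.single_mul_single, circG_single, inv_inv, hBt₁, hB1]
    have := LinearMap.congr_fun key (a ⊗ₜ[F] b)
    simpa using this
  · intro a b
    have key : (LinearMap.mul' F (MonoidAlgebra F G)) ∘ₗ TensorProduct.map Bt₂ Bt₂
        = Bt₂ ∘ₗ circG Bt₁ Bt₂ := by
      apply TensorProduct.ext
      apply mlhom_ext
      intro g c
      apply mlhom_ext
      intro h d
      show LinearMap.mul' F (MonoidAlgebra F G)
          (TensorProduct.map Bt₂ Bt₂ (MonoidAlgebra.single g c ⊗ₜ[F] MonoidAlgebra.single h d))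
        = Bt₂ (circG Bt₁ Bt₂ (MonoidAlgebra.single g c ⊗ₜ[F] MonoidAlgebra.single h d))
      rw [TensorProduct.map_tmul, hBt₂, hBt₂, LinearMap.mul'_apply,
        MonoidAlgebra.single_mul_single, circG_single, inv_inv, hBt₂,
        ← mul_inv_rev, hB2]
    have := LinearMap.congr_fun key (a ⊗ₜ[F] b)
    simpa using this
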